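/- arXiv:1410.5161 — 2 statements merged into one kernel-verified Lean document; each statement's English description precedes it below -/
import Mathlib

section
/- Let (H, α) be a monoidal Hom-bialgebra with Drinfeld twist σ, and (C, α_C) a left H-Hom-module coalgebra. Define Δ̂_C(c) := σ⁽¹⁾·c₁ ⊗ σ⁽²⁾·c₂. Then (C, Δ̂_C, ε_C) is a (strictly) coassociative counital coalgebra over k: (Δ̂_C ⊗ id)∘Δ̂_C = (id ⊗ Δ̂_C)∘Δ̂_C and (ε_C ⊗ id)∘Δ̂_C = (id ⊗ ε_C)∘Δ̂_C = id. -/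
open TensorProduct

noncomputable section
namespace HomTwist

variable {k : Type*} [CommRing k]

section Defs
variable {H₁ H₂ A B : Type*} [AddCommGroup H₁] [Module k H₁] [AddCommGroup H₂] [Module k H₂]
  [AddCommGroup A] [Module k A] [AddCommGroup B] [Module k B]

/-- The componentwise "action" of `H₁ ⊗ H₂` on `A ⊗ B` induced by bilinear actions
`f : H₁ → A → A` and `g : H₂ → B → B`:  `(h₁ ⊗ h₂) • (a ⊗ b) = (f h₁ a) ⊗ (g h₂ b)`. -/
def pairMap (f : H₁ →ₗ[k] A →ₗ[k] A) (g : H₂ →ₗ[k] B →ₗ[k] B) :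
    (H₁ ⊗[k] H₂) →ₗ[k] (A ⊗[k] B) →ₗ[k] A ⊗[k] B :=
  TensorProduct.lift (((TensorProduct.mapBilinear (RingHom.id k) A B A B).comp f).compl₂ g)

end Defs

section Structures
variable {H : Type*} [AddCommGroup H] [Module k H]

/-- Componentwise product on `H ⊗ H` induced by a bilinear multiplication on `H`. -/
def mulT (mul : H →ₗ[k] H →ₗ[k] H) : (H ⊗[k] H) →ₗ[k] (H ⊗[k] H) →ₗ[k] H ⊗[k] H :=
  pairMap mul mul

/-- Componentwise product on `H ⊗ (H ⊗ H)`. -/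
def mulT3 (mul : H →ₗ[k] H →ₗ[k] H) :
    (H ⊗[k] (H ⊗[k] H)) →ₗ[k] (H ⊗[k] (H ⊗[k] H)) →ₗ[k] H ⊗[k] (H ⊗[k] H) :=
  pairMap mul (mulT mul)

/-- `(r ⊗ R) ↦ r⁽¹⁾ ⊗ (R⁽¹⁾ ⊗ r⁽²⁾R⁽²⁾)`. -/
def hexA (mul : H →ₗ[k] H →ₗ[k] H) :
    ((H ⊗[k] H) ⊗[k] (H ⊗[k] H)) →ₗ[k] H ⊗[k] (H ⊗[k] H) :=
  (TensorProduct.assoc k H H H).toLinearMap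
    ∘ₗ TensorProduct.map LinearMap.id (TensorProduct.lift mul)
    ∘ₗ (TensorProduct.tensorTensorTensorComm k H H H H).toLinearMap

/-- `(r ⊗ R) ↦ r⁽¹⁾R⁽¹⁾ ⊗ (R⁽²⁾ ⊗ r⁽²⁾)`. -/
def hexB (mul : H →ₗ[k] H →ₗ[k] H) :
    ((H ⊗[k] H) ⊗[k] (H ⊗[k] H)) →ₗ[k] H ⊗[k] (H ⊗[k] H) :=
  TensorProduct.map (TensorProduct.lift mul) (TensorProduct.comm k H H).toLinearMap
    ∘ₗ (TensorProduct.tensorTensorTensorComm k H H H H).toLinearMap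

/-- Axioms of a monoidal Hom-bialgebra (Caenepeel–Goyvaerts). -/
structure IsMonHomBialgebra (mul : H →ₗ[k] H →ₗ[k] H) (one : H) (alpha : H ≃ₗ[k] H)
    (comul : H →ₗ[k] H ⊗[k] H) (counit : H →ₗ[k] k) : Prop where
  alpha_mul : ∀ a b, alpha (mul a b) = mul (alpha a) (alpha b)
  hom_assoc : ∀ a b c, mul (alpha a) (mul b c) = mul (mul a b) (alpha c)
  alpha_one : alpha one = one
  one_mul' : ∀ a, mul one a = alpha a
  mul_one' : ∀ a, mul a one = alpha a
  comul_alpha : ∀ c, comul (alpha c)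
      = TensorProduct.map alpha.toLinearMap alpha.toLinearMap (comul c)
  hom_coassoc : ∀ c,
      TensorProduct.map alpha.symm.toLinearMap comul (comul c)
        = TensorProduct.assoc k H H H
            (TensorProduct.map comul alpha.symm.toLinearMap (comul c))
  counit_alpha : ∀ c, counit (alpha c) = counit c
  counit_id : ∀ c, TensorProduct.lid k H
      (TensorProduct.map counit LinearMap.id (comul c)) = alpha.symm c
  id_counit : ∀ c, TensorProduct.rid k H
      (TensorProduct.map LinearMap.id counit (comul c)) = alpha.symm c
  comul_mul : ∀ a b, comul (mul a b) = mulT mul (comul a) (comul b)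
  comul_one : comul one = one ⊗ₜ[k] one
  counit_mul : ∀ a b, counit (mul a b) = counit a * counit b
  counit_one : counit one = 1

/-- Axioms of a (Makhlouf–Silvestrov) Hom-bialgebra (with bijective structure map). -/
structure IsHomBialgebra (mul : H →ₗ[k] H →ₗ[k] H) (one : H) (alpha : H ≃ₗ[k] H)
    (comul : H →ₗ[k] H ⊗[k] H) (counit : H →ₗ[k] k) : Prop where
  alpha_mul : ∀ a b, alpha (mul a b) = mul (alpha a) (alpha b)
  hom_assoc : ∀ a b c, mul (alpha a) (mul b c) = mul (mul a b) (alpha c)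
  alpha_one : alpha one = one
  one_mul' : ∀ a, mul one a = alpha a
  mul_one' : ∀ a, mul a one = alpha a
  comul_alpha : ∀ c, comul (alpha c)
      = TensorProduct.map alpha.toLinearMap alpha.toLinearMap (comul c)
  hom_coassoc : ∀ c,
      TensorProduct.map alpha.toLinearMap comul (comul c)
        = TensorProduct.assoc k H H H
            (TensorProduct.map comul alpha.toLinearMap (comul c))
  counit_alpha : ∀ c, counit (alpha c) = counit c
  counit_id : ∀ c, TensorProduct.lid k H
      (TensorProduct.map counit LinearMap.id (comul c)) = alpha c
  id_counit : ∀ c, TensorProduct.rid k H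
      (TensorProduct.map LinearMap.id counit (comul c)) = alpha c
  comul_mul : ∀ a b, comul (mul a b) = mulT mul (comul a) (comul b)
  comul_one : comul one = one ⊗ₜ[k] one
  counit_mul : ∀ a b, counit (mul a b) = counit a * counit b
  counit_one : counit one = 1

/-- Axioms of an ordinary (possibly noncommutative) bialgebra, given by raw data. -/
structure IsBialgebra (mul : H →ₗ[k] H →ₗ[k] H) (one : H)
    (comul : H →ₗ[k] H ⊗[k] H) (counit : H →ₗ[k] k) : Prop where
  assoc : ∀ a b c, mul (mul a b) c = mul a (mul b c)
  one_mul' : ∀ a, mul one a = a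
  mul_one' : ∀ a, mul a one = a
  coassoc : ∀ c, TensorProduct.map LinearMap.id comul (comul c)
      = TensorProduct.assoc k H H H (TensorProduct.map comul LinearMap.id (comul c))
  counit_id : ∀ c, TensorProduct.lid k H
      (TensorProduct.map counit LinearMap.id (comul c)) = c
  id_counit : ∀ c, TensorProduct.rid k H
      (TensorProduct.map LinearMap.id counit (comul c)) = c
  comul_mul : ∀ a b, comul (mul a b) = mulT mul (comul a) (comul b)
  comul_one : comul one = one ⊗ₜ[k] one
  counit_mul : ∀ a b, counit (mul a b) = counit a * counit b
  counit_one : counit one = 1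

/-- A Drinfeld twist `σ` (with inverse `ϱ`) for a monoidal Hom-bialgebra. -/
structure IsTwist (mul : H →ₗ[k] H →ₗ[k] H) (one : H) (alpha : H ≃ₗ[k] H)
    (comul : H →ₗ[k] H ⊗[k] H) (counit : H →ₗ[k] k) (σ ϱ : H ⊗[k] H) : Prop where
  mul_inv : mulT mul σ ϱ = one ⊗ₜ[k] one
  inv_mul : mulT mul ϱ σ = one ⊗ₜ[k] one
  T1 : TensorProduct.map alpha.toLinearMap alpha.toLinearMap σ = σ
  T2l : TensorProduct.lid k H (TensorProduct.map counit LinearMap.id σ) = one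
  T2r : TensorProduct.rid k H (TensorProduct.map LinearMap.id counit σ) = one
  T3 : TensorProduct.map LinearMap.id (mulT mul σ)
        (TensorProduct.map LinearMap.id comul σ)
      = TensorProduct.assoc k H H H
          (TensorProduct.map (mulT mul σ) LinearMap.id
            (TensorProduct.map comul LinearMap.id σ))

/-- The `R`-matrix axioms (Q1)–(Q4) for a monoidal Hom-bialgebra. -/
structure IsRMatrix (mul : H →ₗ[k] H →ₗ[k] H) (alpha : H ≃ₗ[k] H)
    (comul : H →ₗ[k] H ⊗[k] H) (R : H ⊗[k] H) : Prop where
  Q1 : TensorProduct.map alpha.toLinearMap alpha.toLinearMap R = R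
  Q2 : ∀ h, mulT mul R (comul h)
      = mulT mul (TensorProduct.comm k H H (comul h)) R
  Q3 : TensorProduct.assoc k H H H (TensorProduct.map comul LinearMap.id R)
      = hexA mul (R ⊗ₜ[k] R)
  Q4 : TensorProduct.map LinearMap.id comul R = hexB mul (R ⊗ₜ[k] R)

/-- Axioms of a monoidal Hom-algebra. -/
structure IsMonHomAlgebra {A : Type*} [AddCommGroup A] [Module k A]
    (mul : A →ₗ[k] A →ₗ[k] A) (one : A) (alpha : A ≃ₗ[k] A) : Prop where
  alpha_mul : ∀ a b, alpha (mul a b) = mul (alpha a) (alpha b)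
  hom_assoc : ∀ a b c, mul (alpha a) (mul b c) = mul (mul a b) (alpha c)
  alpha_one : alpha one = one
  one_mul' : ∀ a, mul one a = alpha a
  mul_one' : ∀ a, mul a one = alpha a

/-- Axioms of a monoidal Hom-coalgebra. -/
structure IsMonHomCoalgebra {C : Type*} [AddCommGroup C] [Module k C]
    (comul : C →ₗ[k] C ⊗[k] C) (counit : C →ₗ[k] k) (alpha : C ≃ₗ[k] C) : Prop where
  comul_alpha : ∀ c, comul (alpha c)
      = TensorProduct.map alpha.toLinearMap alpha.toLinearMap (comul c)
  hom_coassoc : ∀ c,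
      TensorProduct.map alpha.symm.toLinearMap comul (comul c)
        = TensorProduct.assoc k C C C
            (TensorProduct.map comul alpha.symm.toLinearMap (comul c))
  counit_alpha : ∀ c, counit (alpha c) = counit c
  counit_id : ∀ c, TensorProduct.lid k C
      (TensorProduct.map counit LinearMap.id (comul c)) = alpha.symm c
  id_counit : ∀ c, TensorProduct.rid k C
      (TensorProduct.map LinearMap.id counit (comul c)) = alpha.symm c

/-- Axioms of a left `H`-Hom-module. -/
structure IsHomModule {M : Type*} [AddCommGroup M] [Module k M]
    (mul : H →ₗ[k] H →ₗ[k] H) (one : H) (alpha : H ≃ₗ[k] H)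
    (alM : M ≃ₗ[k] M) (act : H →ₗ[k] M →ₗ[k] M) : Prop where
  compat : ∀ h m, alM (act h m) = act (alpha h) (alM m)
  hom_smul : ∀ h h' m, act (alpha h) (act h' m) = act (mul h h') (alM m)
  one_smul' : ∀ m, act one m = alM m

/-- The twisted coproduct `Δᵠ(x) = (σ Δ(x)) ϱ`. -/
def twistComul (mul : H →ₗ[k] H →ₗ[k] H) (comul : H →ₗ[k] H ⊗[k] H)
    (σ ϱ : H ⊗[k] H) : H →ₗ[k] H ⊗[k] H :=
  ((mulT mul).flip ϱ) ∘ₗ (mulT mul σ) ∘ₗ comul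

end Structures
end HomTwist
end

namespace HomTwist
open TensorProduct

section Helpers
variable {k : Type*} [CommRing k]
variable {H C : Type*} [AddCommGroup H] [Module k H] [AddCommGroup C] [Module k C]

lemma pairMap_tmul {H₁ H₂ A B : Type*} [AddCommGroup H₁] [Module k H₁]
    [AddCommGroup H₂] [Module k H₂] [AddCommGroup A] [Module k A] [AddCommGroup B] [Module k B]
    (f : H₁ →ₗ[k] A →ₗ[k] A) (g : H₂ →ₗ[k] B →ₗ[k] B) (h₁ : H₁) (h₂ : H₂) :
    pairMap f g (h₁ ⊗ₜ[k] h₂) = TensorProduct.map (f h₁) (g h₂) := by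
  simp [pairMap]

lemma map_map' {M N P Q P' Q' : Type*} [AddCommGroup M] [Module k M] [AddCommGroup N] [Module k N]
    [AddCommGroup P] [Module k P] [AddCommGroup Q] [Module k Q]
    [AddCommGroup P'] [Module k P'] [AddCommGroup Q'] [Module k Q']
    (f₂ : P →ₗ[k] P') (f₁ : M →ₗ[k] P) (g₂ : Q →ₗ[k] Q') (g₁ : N →ₗ[k] Q) (x : M ⊗[k] N) :
    TensorProduct.map f₂ g₂ (TensorProduct.map f₁ g₁ x)
      = TensorProduct.map (f₂ ∘ₗ f₁) (g₂ ∘ₗ g₁) x := by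
  rw [TensorProduct.map_comp]; rfl

lemma pairMap_pairMap (mul : H →ₗ[k] H →ₗ[k] H) (one : H) (alpha : H ≃ₗ[k] H)
    (alC : C ≃ₗ[k] C) (act : H →ₗ[k] C →ₗ[k] C)
    (hmod : IsHomModule mul one alpha alC act)
    (s t : H ⊗[k] H) (d : C ⊗[k] C) :
    pairMap act act s (pairMap act act t d)
      = pairMap act act
          (mulT mul (TensorProduct.map alpha.symm.toLinearMap alpha.symm.toLinearMap s) t)
          (TensorProduct.map alC.toLinearMap alC.toLinearMap d) := by
  induction s using TensorProduct.induction_on with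
  | zero => simp
  | add s₁ s₂ ih₁ ih₂ => simp only [map_add, LinearMap.add_apply, ih₁, ih₂]
  | tmul h h' =>
    induction t using TensorProduct.induction_on with
    | zero => simp
    | add t₁ t₂ ih₁ ih₂ => simp only [map_add, LinearMap.add_apply, ih₁, ih₂]
    | tmul g g' =>
      induction d using TensorProduct.induction_on with
      | zero => simp
      | add d₁ d₂ ih₁ ih₂ => simp only [map_add, ih₁, ih₂]
      | tmul x y =>
        simp only [pairMap_tmul, mulT, map_tmul, LinearMap.coe_comp, Function.comp_apply,
          LinearEquiv.coe_coe]
        rw [← hmod.hom_smul, ← hmod.hom_smul, alpha.apply_symm_apply, alpha.apply_symm_apply]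

lemma twist_claim1 (mul : H →ₗ[k] H →ₗ[k] H) (one : H) (alpha : H ≃ₗ[k] H)
    (comul : H →ₗ[k] H ⊗[k] H) (σ : H ⊗[k] H)
    (comulC : C →ₗ[k] C ⊗[k] C) (alC : C ≃ₗ[k] C) (act : H →ₗ[k] C →ₗ[k] C)
    (hmod : IsHomModule mul one alpha alC act)
    (hσinv : TensorProduct.map alpha.symm.toLinearMap alpha.symm.toLinearMap σ = σ)
    (hca : ∀ c, comulC (alC c) = TensorProduct.map alC.toLinearMap alC.toLinearMap (comulC c))
    (hmc₁ : ∀ h c, comulC (act h c) = pairMap act act (comul h) (comulC c))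
    (s : H ⊗[k] H) (d : C ⊗[k] C) :
    TensorProduct.map LinearMap.id ((pairMap act act σ) ∘ₗ comulC) (pairMap act act s d)
      = pairMap act (pairMap act act)
          (TensorProduct.map LinearMap.id ((mulT mul σ) ∘ₗ comul) s)
          (TensorProduct.map LinearMap.id (comulC ∘ₗ alC.toLinearMap) d) := by
  induction s using TensorProduct.induction_on with
  | zero => simp
  | add s₁ s₂ ih₁ ih₂ => simp only [map_add, LinearMap.add_apply, ih₁, ih₂]
  | tmul h h' =>
    induction d using TensorProduct.induction_on with
    | zero => simp
    | add d₁ d₂ ih₁ ih₂ => simp only [map_add, ih₁, ih₂]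
    | tmul x y =>
      simp only [pairMap_tmul, map_tmul, LinearMap.id_coe, id_eq, LinearMap.coe_comp,
        Function.comp_apply, LinearEquiv.coe_coe]
      congr 1
      rw [hmc₁, pairMap_pairMap mul one alpha alC act hmod, hσinv, ← hca]

lemma twist_claim2 (mul : H →ₗ[k] H →ₗ[k] H) (one : H) (alpha : H ≃ₗ[k] H)
    (comul : H →ₗ[k] H ⊗[k] H) (σ : H ⊗[k] H)
    (comulC : C →ₗ[k] C ⊗[k] C) (alC : C ≃ₗ[k] C) (act : H →ₗ[k] C →ₗ[k] C)
    (hmod : IsHomModule mul one alpha alC act)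
    (hσinv : TensorProduct.map alpha.symm.toLinearMap alpha.symm.toLinearMap σ = σ)
    (hca : ∀ c, comulC (alC c) = TensorProduct.map alC.toLinearMap alC.toLinearMap (comulC c))
    (hmc₁ : ∀ h c, comulC (act h c) = pairMap act act (comul h) (comulC c))
    (s : H ⊗[k] H) (d : C ⊗[k] C) :
    TensorProduct.map ((pairMap act act σ) ∘ₗ comulC) LinearMap.id (pairMap act act s d)
      = pairMap (pairMap act act) act
          (TensorProduct.map ((mulT mul σ) ∘ₗ comul) LinearMap.id s)
          (TensorProduct.map (comulC ∘ₗ alC.toLinearMap) LinearMap.id d) := by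
  induction s using TensorProduct.induction_on with
  | zero => simp
  | add s₁ s₂ ih₁ ih₂ => simp only [map_add, LinearMap.add_apply, ih₁, ih₂]
  | tmul h h' =>
    induction d using TensorProduct.induction_on with
    | zero => simp
    | add d₁ d₂ ih₁ ih₂ => simp only [map_add, ih₁, ih₂]
    | tmul x y =>
      simp only [pairMap_tmul, map_tmul, LinearMap.id_coe, id_eq, LinearMap.coe_comp,
        Function.comp_apply, LinearEquiv.coe_coe]
      congr 1
      rw [hmc₁, pairMap_pairMap mul one alpha alC act hmod, hσinv, ← hca]

lemma assoc_pairMap (act : H →ₗ[k] C →ₗ[k] C)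
    (t : (H ⊗[k] H) ⊗[k] H) (u : (C ⊗[k] C) ⊗[k] C) :
    TensorProduct.assoc k C C C (pairMap (pairMap act act) act t u)
      = pairMap act (pairMap act act)
          (TensorProduct.assoc k H H H t) (TensorProduct.assoc k C C C u) := by
  induction t using TensorProduct.induction_on with
  | zero => simp
  | add t₁ t₂ ih₁ ih₂ => simp only [map_add, LinearMap.add_apply, ih₁, ih₂]
  | tmul a h'' =>
    induction a using TensorProduct.induction_on with
    | zero => simp
    | add a₁ a₂ ih₁ ih₂ =>
      simp only [add_tmul, map_add, LinearMap.add_apply, ih₁, ih₂]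
    | tmul h h' =>
      simp only [pairMap_tmul, assoc_tmul]
      exact (TensorProduct.map_map_assoc _ _ _ u).symm

lemma coassoc' (comulC : C →ₗ[k] C ⊗[k] C) (alC : C ≃ₗ[k] C)
    (hca : ∀ c, comulC (alC c) = TensorProduct.map alC.toLinearMap alC.toLinearMap (comulC c))
    (hcoa : ∀ c, TensorProduct.map alC.symm.toLinearMap comulC (comulC c)
        = TensorProduct.assoc k C C C
            (TensorProduct.map comulC alC.symm.toLinearMap (comulC c)))
    (c : C) :
    TensorProduct.map LinearMap.id (comulC ∘ₗ alC.toLinearMap) (comulC c)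
      = TensorProduct.assoc k C C C
          (TensorProduct.map (comulC ∘ₗ alC.toLinearMap) LinearMap.id (comulC c)) := by
  have e1 : (TensorProduct.map alC.toLinearMap alC.toLinearMap) ∘ₗ comulC
      = comulC ∘ₗ alC.toLinearMap := LinearMap.ext fun x => (hca x).symm
  have e2 : alC.toLinearMap ∘ₗ alC.symm.toLinearMap = LinearMap.id := by
    ext x; simp
  have h := congrArg
    (TensorProduct.map alC.toLinearMap (TensorProduct.map alC.toLinearMap alC.toLinearMap))
    (hcoa c)
  rw [map_map', TensorProduct.map_map_assoc, map_map', e1, e2] at h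
  exact h

lemma counit_pair_l (counit : H →ₗ[k] k) (counitC : C →ₗ[k] k) (act : H →ₗ[k] C →ₗ[k] C)
    (hmc₂ : ∀ h c, counitC (act h c) = counit h * counitC c)
    (s : H ⊗[k] H) (d : C ⊗[k] C) :
    TensorProduct.lid k C (TensorProduct.map counitC LinearMap.id (pairMap act act s d))
      = act (TensorProduct.lid k H (TensorProduct.map counit LinearMap.id s))
            (TensorProduct.lid k C (TensorProduct.map counitC LinearMap.id d)) := by
  induction s using TensorProduct.induction_on with
  | zero => simp
  | add s₁ s₂ ih₁ ih₂ => simp only [map_add, LinearMap.add_apply, ih₁, ih₂]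
  | tmul h h' =>
    induction d using TensorProduct.induction_on with
    | zero => simp
    | add d₁ d₂ ih₁ ih₂ => simp only [map_add, ih₁, ih₂]
    | tmul x y =>
      simp only [pairMap_tmul, map_tmul, LinearMap.id_coe, id_eq, lid_tmul, hmc₂,
        map_smul, LinearMap.smul_apply, smul_smul]
      rw [mul_comm]

lemma counit_pair_r (counit : H →ₗ[k] k) (counitC : C →ₗ[k] k) (act : H →ₗ[k] C →ₗ[k] C)
    (hmc₂ : ∀ h c, counitC (act h c) = counit h * counitC c)
    (s : H ⊗[k] H) (d : C ⊗[k] C) :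
    TensorProduct.rid k C (TensorProduct.map LinearMap.id counitC (pairMap act act s d))
      = act (TensorProduct.rid k H (TensorProduct.map LinearMap.id counit s))
            (TensorProduct.rid k C (TensorProduct.map LinearMap.id counitC d)) := by
  induction s using TensorProduct.induction_on with
  | zero => simp
  | add s₁ s₂ ih₁ ih₂ => simp only [map_add, LinearMap.add_apply, ih₁, ih₂]
  | tmul h h' =>
    induction d using TensorProduct.induction_on with
    | zero => simp
    | add d₁ d₂ ih₁ ih₂ => simp only [map_add, ih₁, ih₂]
    | tmul x y =>
      simp only [pairMap_tmul, map_tmul, LinearMap.id_coe, id_eq, rid_tmul, hmc₂,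
        map_smul, LinearMap.smul_apply, smul_smul]
      rw [mul_comm]

end Helpers
end HomTwist

namespace HomTwist
open TensorProduct

/-- (Proposition 4.4(2)) Twisting the coproduct of an
`H`-Hom-module coalgebra `C` by a Drinfeld twist `σ`,
`Δ̂(c) = σ⁽¹⁾·c₁ ⊗ σ⁽²⁾·c₂`, yields a strictly coassociative counital coalgebra. -/
theorem module_coalgebra_twist
    {k H C : Type*} [CommRing k] [AddCommGroup H] [Module k H]
    [AddCommGroup C] [Module k C]
    (mul : H →ₗ[k] H →ₗ[k] H) (one : H) (alpha : H ≃ₗ[k] H)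
    (comul : H →ₗ[k] H ⊗[k] H) (counit : H →ₗ[k] k) (σ ϱ : H ⊗[k] H)
    (hH : IsMonHomBialgebra mul one alpha comul counit)
    (hσ : IsTwist mul one alpha comul counit σ ϱ)
    (comulC : C →ₗ[k] C ⊗[k] C) (counitC : C →ₗ[k] k) (alC : C ≃ₗ[k] C)
    (act : H →ₗ[k] C →ₗ[k] C)
    (hC : IsMonHomCoalgebra comulC counitC alC)
    (hmod : IsHomModule mul one alpha alC act)
    -- module-coalgebra compatibility: `Δ_C(h·c) = h₁·c₁ ⊗ h₂·c₂`, `ε_C(h·c) = ε(h)ε_C(c)`: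
    (hmc₁ : ∀ h c, comulC (act h c) = pairMap act act (comul h) (comulC c))
    (hmc₂ : ∀ h c, counitC (act h c) = counit h * counitC c) :
    (∀ c, TensorProduct.map LinearMap.id ((pairMap act act σ) ∘ₗ comulC)
        (((pairMap act act σ) ∘ₗ comulC) c)
      = TensorProduct.assoc k C C C
          (TensorProduct.map ((pairMap act act σ) ∘ₗ comulC) LinearMap.id
            (((pairMap act act σ) ∘ₗ comulC) c)))
    ∧ (∀ c, TensorProduct.lid k C (TensorProduct.map counitC LinearMap.id
        (((pairMap act act σ) ∘ₗ comulC) c)) = c)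
    ∧ (∀ c, TensorProduct.rid k C (TensorProduct.map LinearMap.id counitC
        (((pairMap act act σ) ∘ₗ comulC) c)) = c) := by
  have σinv : TensorProduct.map alpha.symm.toLinearMap alpha.symm.toLinearMap σ = σ := by
    conv_lhs => rw [← hσ.T1]
    rw [map_map']
    have e : alpha.symm.toLinearMap ∘ₗ alpha.toLinearMap = LinearMap.id := by ext x; simp
    rw [e, TensorProduct.map_id, LinearMap.id_apply]
  refine ⟨?_, ?_, ?_⟩
  · intro c
    have T3' : TensorProduct.map LinearMap.id ((mulT mul σ) ∘ₗ comul) σ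
        = TensorProduct.assoc k H H H
            (TensorProduct.map ((mulT mul σ) ∘ₗ comul) LinearMap.id σ) := by
      have h := hσ.T3
      rw [map_map', map_map', LinearMap.id_comp] at h
      exact h
    simp only [LinearMap.comp_apply]
    rw [twist_claim1 mul one alpha comul σ comulC alC act hmod σinv hC.comul_alpha hmc₁
        σ (comulC c),
      coassoc' comulC alC hC.comul_alpha hC.hom_coassoc c, T3', ← assoc_pairMap,
      ← twist_claim2 mul one alpha comul σ comulC alC act hmod σinv hC.comul_alpha hmc₁
        σ (comulC c)]
  · intro c
    simp only [LinearMap.comp_apply]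
    rw [counit_pair_l counit counitC act hmc₂ σ (comulC c), hσ.T2l, hC.counit_id,
      hmod.one_smul']
    exact alC.apply_symm_apply c
  · intro c
    simp only [LinearMap.comp_apply]
    rw [counit_pair_r counit counitC act hmc₂ σ (comulC c), hσ.T2r, hC.id_counit,
      hmod.one_smul']
    exact alC.apply_symm_apply c


end HomTwist
end

section
/- Let (H, α) be a monoidal Hom-bialgebra with Drinfeld twist σ and inverse ϱ. Define Δᵠ(x) := (σΔ(x))ϱ for x ∈ H (product in H⊗H componentwise). Then Δᵠ is a Hom-algebra map preserving the unit: Δᵠ(xy) = Δᵠ(x)Δᵠ(y), Δᵠ(1_H) = 1_H⊗1_H, and Δᵠ∘α = (α⊗α)∘Δᵠ. -/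
open TensorProduct

namespace HomTwist
open TensorProduct

section AuxLemmas
variable {k H : Type*} [CommRing k] [AddCommGroup H] [Module k H]

lemma mulT_tmul (mul : H →ₗ[k] H →ₗ[k] H) (a b c d : H) :
    mulT mul (a ⊗ₜ[k] b) (c ⊗ₜ[k] d) = mul a c ⊗ₜ[k] mul b d := by
  simp [mulT, pairMap]

lemma mulT_map_map (mul : H →ₗ[k] H →ₗ[k] H) (f : H →ₗ[k] H)
    (hf : ∀ a b, f (mul a b) = mul (f a) (f b)) (s t : H ⊗[k] H) :
    TensorProduct.map f f (mulT mul s t)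
      = mulT mul (TensorProduct.map f f s) (TensorProduct.map f f t) := by
  induction s using TensorProduct.induction_on with
  | zero => simp
  | tmul a b =>
    induction t using TensorProduct.induction_on with
    | zero => simp
    | tmul c d => simp [mulT_tmul, hf]
    | add x y hx hy => simp only [map_add, hx, hy]
  | add x y hx hy =>
    simp only [map_add, LinearMap.add_apply, hx, hy]

lemma mulT_hom_assoc (mul : H →ₗ[k] H →ₗ[k] H) (alpha : H ≃ₗ[k] H)
    (hA : ∀ a b c, mul (alpha a) (mul b c) = mul (mul a b) (alpha c))
    (s t u : H ⊗[k] H) :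
    mulT mul (TensorProduct.map alpha.toLinearMap alpha.toLinearMap s) (mulT mul t u)
      = mulT mul (mulT mul s t)
          (TensorProduct.map alpha.toLinearMap alpha.toLinearMap u) := by
  induction s using TensorProduct.induction_on with
  | zero => simp
  | tmul a b =>
    induction t using TensorProduct.induction_on with
    | zero => simp
    | tmul c d =>
      induction u using TensorProduct.induction_on with
      | zero => simp
      | tmul e f => simp [mulT_tmul, hA]
      | add x y hx hy => simp only [map_add, hx, hy]
    | add x y hx hy =>
      simp only [map_add, LinearMap.add_apply, hx, hy]
  | add x y hx hy =>
    simp only [map_add, LinearMap.add_apply, hx, hy]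

lemma mulT_one_left (mul : H →ₗ[k] H →ₗ[k] H) (one : H) (alpha : H ≃ₗ[k] H)
    (h1 : ∀ a, mul one a = alpha a) (t : H ⊗[k] H) :
    mulT mul (one ⊗ₜ[k] one) t
      = TensorProduct.map alpha.toLinearMap alpha.toLinearMap t := by
  induction t using TensorProduct.induction_on with
  | zero => simp
  | tmul a b => simp [mulT_tmul, h1]
  | add x y hx hy => simp only [map_add, hx, hy]

lemma mulT_one_right (mul : H →ₗ[k] H →ₗ[k] H) (one : H) (alpha : H ≃ₗ[k] H)
    (h1 : ∀ a, mul a one = alpha a) (t : H ⊗[k] H) :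
    mulT mul t (one ⊗ₜ[k] one)
      = TensorProduct.map alpha.toLinearMap alpha.toLinearMap t := by
  induction t using TensorProduct.induction_on with
  | zero => simp
  | tmul a b => simp [mulT_tmul, h1]
  | add x y hx hy => simp only [map_add, LinearMap.add_apply, hx, hy]

end AuxLemmas

/-- (Lemma 4.5) The twisted coproduct `Δᵠ(x) = (σΔ(x))ϱ` is a
Hom-algebra map preserving the unit. -/
theorem twisted_comul_is_algebra_map
    {k H : Type*} [CommRing k] [AddCommGroup H] [Module k H]
    (mul : H →ₗ[k] H →ₗ[k] H) (one : H) (alpha : H ≃ₗ[k] H)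
    (comul : H →ₗ[k] H ⊗[k] H) (counit : H →ₗ[k] k) (σ ϱ : H ⊗[k] H)
    (hH : IsMonHomBialgebra mul one alpha comul counit)
    (hσ : IsTwist mul one alpha comul counit σ ϱ) :
    (∀ x y, twistComul mul comul σ ϱ (mul x y)
        = mulT mul (twistComul mul comul σ ϱ x) (twistComul mul comul σ ϱ y))
    ∧ twistComul mul comul σ ϱ one = one ⊗ₜ[k] one
    ∧ (∀ x, twistComul mul comul σ ϱ (alpha x)
        = TensorProduct.map alpha.toLinearMap alpha.toLinearMap
            (twistComul mul comul σ ϱ x)) := by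
  set β : H ⊗[k] H →ₗ[k] H ⊗[k] H :=
    TensorProduct.map alpha.toLinearMap alpha.toLinearMap with hβdef
  set e : H ⊗[k] H := one ⊗ₜ[k] one with hedef
  have hβ : ∀ s t, β (mulT mul s t) = mulT mul (β s) (β t) :=
    mulT_map_map mul alpha.toLinearMap hH.alpha_mul
  have hassoc : ∀ s t u, mulT mul (β s) (mulT mul t u)
      = mulT mul (mulT mul s t) (β u) :=
    mulT_hom_assoc mul alpha hH.hom_assoc
  have h1l : ∀ t, mulT mul e t = β t := mulT_one_left mul one alpha hH.one_mul'
  have h1r : ∀ t, mulT mul t e = β t := mulT_one_right mul one alpha hH.mul_one'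
  have hβe : β e = e := by simp [hβdef, hedef, hH.alpha_one]
  have hβσ : β σ = σ := hσ.T1
  have hβinj : Function.Injective β := by
    have hcongr : β = (TensorProduct.congr alpha alpha).toLinearMap := by
      apply TensorProduct.ext'
      intro a b
      simp [hβdef, TensorProduct.congr_tmul]
    rw [hcongr]
    exact (TensorProduct.congr alpha alpha).injective
  have hβϱ : β ϱ = ϱ := by
    apply hβinj; apply hβinj
    have h1 : mulT mul σ (β ϱ) = e := by
      rw [← hβσ, ← hβ, hσ.mul_inv, hβe]
    have h2 : mulT mul (β ϱ) (mulT mul σ (β ϱ)) = β (β ϱ) := by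
      rw [h1, h1r]
    have h3 : mulT mul (β ϱ) (mulT mul σ (β ϱ)) = β (β (β ϱ)) := by
      rw [hassoc, hσ.inv_mul, h1l]
    rw [← h3]; exact h2
  have hD : ∀ x, twistComul mul comul σ ϱ x
      = mulT mul (mulT mul σ (comul x)) ϱ := fun x => rfl
  refine ⟨?_, ?_, ?_⟩
  · intro x y
    rw [hD, hD, hD, hH.comul_mul]
    set a := comul x
    set b := comul y
    -- find b' with β b' = b
    obtain ⟨b', hb'⟩ : ∃ b', β b' = b :=
      ⟨(TensorProduct.congr alpha alpha).symm b, by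
        have hcongr : β = (TensorProduct.congr alpha alpha).toLinearMap := by
          apply TensorProduct.ext'
          intro u v
          simp [hβdef, TensorProduct.congr_tmul]
        rw [hcongr]
        exact (TensorProduct.congr alpha alpha).apply_symm_apply b⟩
    have step1 : mulT mul (mulT mul σ b) ϱ
        = β (mulT mul (mulT mul σ b') ϱ) := by
      rw [hβ, hβ, hβσ, hβϱ, hb']
    have step3 : mulT mul ϱ (mulT mul (mulT mul σ b') ϱ)
        = mulT mul (β b) ϱ := by
      conv_lhs => rw [← hβϱ]
      rw [hassoc, hβϱ]
      congr 1
      conv_lhs => rw [← hβϱ]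
      rw [hassoc, hσ.inv_mul, h1l, hb']
    calc mulT mul (mulT mul σ (mulT mul a b)) ϱ
        = mulT mul (mulT mul (β σ) (mulT mul a b)) ϱ := by rw [hβσ]
      _ = mulT mul (mulT mul (mulT mul σ a) (β b)) ϱ := by rw [hassoc]
      _ = mulT mul (mulT mul (mulT mul σ a) (β b)) (β ϱ) := by rw [hβϱ]
      _ = mulT mul (β (mulT mul σ a)) (mulT mul (β b) ϱ) := by rw [hassoc]
      _ = mulT mul (β (mulT mul σ a))
            (mulT mul ϱ (mulT mul (mulT mul σ b') ϱ)) := by rw [step3]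
      _ = mulT mul (mulT mul (mulT mul σ a) ϱ)
            (β (mulT mul (mulT mul σ b') ϱ)) := by rw [hassoc]
      _ = mulT mul (mulT mul (mulT mul σ a) ϱ)
            (mulT mul (mulT mul σ b) ϱ) := by rw [← step1]
  · rw [hD, hH.comul_one]
    have : mulT mul σ (one ⊗ₜ[k] one) = σ := by
      rw [h1r σ, hβσ]
    rw [this, hσ.mul_inv]
  · intro x
    rw [hD, hD, hH.comul_alpha]
    rw [show TensorProduct.map alpha.toLinearMap alpha.toLinearMap = β from rfl]
    rw [hβ, hβ, hβσ, hβϱ]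

end HomTwist
end
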